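/- Let (R, m) be a Noetherian local ring with residue field K and let M be an Artinian R-module. Let M⟨x^{-1}⟩ = M ⊗_ℤ (ℤ[x, x^{-1}]/ℤ[x]), viewed as a module over the power series ring R[[x]] (every element is killed by a power of x). Then M⟨x^{-1}⟩ is an Artinian R[[x]]-module. -/

import Mathlib

section Aux

/-- Stabilization for families antitone in both indices, over a poset where
descending chains stabilize. -/
lemma stmt13_antitone_stab {α : Type*} [PartialOrder α]
    (hstab : ∀ f : ℕ → α, (∀ i, f (i + 1) ≤ f i) → ∃ n, ∀ m, n ≤ m → f m = f n)
    (L : ℕ → ℕ → α)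
    (hk : ∀ i k, L i (k + 1) ≤ L i k)
    (hi : ∀ i k, L (i + 1) k ≤ L i k) :
    ∃ I, ∀ j, I ≤ j → ∀ k, L j k = L I k := by
  classical
  have hii : ∀ k i j, i ≤ j → L j k ≤ L i k := by
    intro k i j hij
    induction hij with
    | refl => exact le_rfl
    | step h ih => exact le_trans (hi _ k) ih
  choose stab hstab' using fun k => hstab (fun i => L i k) (fun i => hi i k)
  set g : ℕ → α := fun k => L (stab k) k with hg
  have hgle : ∀ i k, g k ≤ L i k := by
    intro i k
    rcases le_total i (stab k) with h | h
    · exact hii k i (stab k) h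
    · exact le_of_eq (hstab' k i h).symm
  have hgev : ∀ k i, stab k ≤ i → L i k = g k := fun k i h => hstab' k i h
  have hgmono : ∀ k, g (k + 1) ≤ g k := by
    intro k
    set i := max (stab k) (stab (k + 1)) with hidef
    calc g (k + 1) = L i (k + 1) := (hgev (k + 1) i (le_max_right _ _)).symm
      _ ≤ L i k := hk i k
      _ = g k := hgev k i (le_max_left _ _)
  obtain ⟨K, hK⟩ := hstab g hgmono
  have key : ∃ I, ∀ k, L I k = g k := by
    by_contra hcon
    push_neg at hcon
    set i₀ := (Finset.range (K + 1)).sup stab with hi0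
    have hsmall : ∀ k, k ≤ K → L i₀ k = g k := by
      intro k hkK
      exact hgev k i₀ (Finset.le_sup (f := stab) (Finset.mem_range.mpr (by omega)))
    obtain ⟨k₁, hk₁⟩ := hcon i₀
    have hex : ∃ k, L i₀ k ≠ g k := ⟨k₁, hk₁⟩
    set k₀ := Nat.find hex with hk0def
    have hk₀ : L i₀ k₀ ≠ g k₀ := Nat.find_spec hex
    have hmin : ∀ k, k < k₀ → L i₀ k = g k := by
      intro k hkk
      by_contra hne
      exact absurd (Nat.find_min hex hkk) (by simpa using hne)
    have hKk₀ : K < k₀ := by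
      by_contra hle
      exact hk₀ (hsmall k₀ (by omega))
    have hsucc : k₀ - 1 + 1 = k₀ := by omega
    have h1 : L i₀ k₀ ≤ g k₀ := by
      calc L i₀ k₀ = L i₀ (k₀ - 1 + 1) := by rw [hsucc]
        _ ≤ L i₀ (k₀ - 1) := hk i₀ (k₀ - 1)
        _ = g (k₀ - 1) := hmin (k₀ - 1) (by omega)
        _ = g K := hK (k₀ - 1) (by omega)
        _ = g k₀ := (hK k₀ (by omega)).symm
    exact hk₀ (le_antisymm h1 (hgle i₀ k₀))
  obtain ⟨I, hIg⟩ := key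
  exact ⟨I, fun j hj k => le_antisymm (hii k I j hj) ((hIg k).trans_le (hgle j k))⟩

variable {R : Type} [CommRing R] {M : Type} [AddCommGroup M] [Module R M]
  {N : Type} [AddCommGroup N] [Module (PowerSeries R) N]

/-- The submodule of top coefficients at level `k` of elements of `P` supported in `[0,k]`. -/
def stmt13_lead (e : N ≃+ (ℕ →₀ M))
    (hC : ∀ (r : R) (w : N), e ((PowerSeries.C (R := R) r) • w) = r • e w)
    (P : Submodule (PowerSeries R) N) (k : ℕ) : Submodule R M where
  carrier := {m | ∃ w, w ∈ P ∧ (∀ k', k < k' → e w k' = 0) ∧ e w k = m}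
  zero_mem' := ⟨0, P.zero_mem, fun k' _ => by simp, by simp⟩
  add_mem' := by
    rintro a b ⟨w, hw, hw0, rfl⟩ ⟨v, hv, hv0, rfl⟩
    exact ⟨w + v, P.add_mem hw hv,
      fun k' h => by simp [map_add, Finsupp.add_apply, hw0 k' h, hv0 k' h],
      by simp [map_add, Finsupp.add_apply]⟩
  smul_mem' := by
    rintro r a ⟨w, hw, hw0, rfl⟩
    exact ⟨PowerSeries.C (R := R) r • w, P.smul_mem _ hw,
      fun k' h => by simp [hC, Finsupp.smul_apply, hw0 k' h],
      by simp [hC, Finsupp.smul_apply]⟩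

lemma stmt13_mem_lead {e : N ≃+ (ℕ →₀ M)}
    {hC : ∀ (r : R) (w : N), e ((PowerSeries.C (R := R) r) • w) = r • e w}
    {P : Submodule (PowerSeries R) N} {k : ℕ} {a : M} :
    a ∈ stmt13_lead e hC P k ↔ ∃ w, w ∈ P ∧ (∀ k', k < k' → e w k' = 0) ∧ e w k = a :=
  Iff.rfl

lemma stmt13_lead_succ_le (e : N ≃+ (ℕ →₀ M))
    (hC : ∀ (r : R) (w : N), e ((PowerSeries.C (R := R) r) • w) = r • e w)
    (hX : ∀ (w : N) (n : ℕ), e ((PowerSeries.X : PowerSeries R) • w) n = e w (n + 1))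
    (P : Submodule (PowerSeries R) N) (k : ℕ) :
    stmt13_lead e hC P (k + 1) ≤ stmt13_lead e hC P k := by
  rintro a ⟨w, hw, hw0, rfl⟩
  exact ⟨(PowerSeries.X : PowerSeries R) • w, P.smul_mem _ hw,
    fun k' h => by rw [hX w k']; exact hw0 (k' + 1) (by omega), hX w k⟩

lemma stmt13_lead_mono (e : N ≃+ (ℕ →₀ M))
    (hC : ∀ (r : R) (w : N), e ((PowerSeries.C (R := R) r) • w) = r • e w)
    {P Q : Submodule (PowerSeries R) N} (hQP : Q ≤ P) (k : ℕ) :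
    stmt13_lead e hC Q k ≤ stmt13_lead e hC P k := by
  rintro a ⟨w, hw, hw0, rfl⟩
  exact ⟨w, hQP hw, hw0, rfl⟩

lemma stmt13_le_of_lead_le (e : N ≃+ (ℕ →₀ M))
    (hC : ∀ (r : R) (w : N), e ((PowerSeries.C (R := R) r) • w) = r • e w)
    {P Q : Submodule (PowerSeries R) N} (hQP : Q ≤ P)
    (h : ∀ k, stmt13_lead e hC P k ≤ stmt13_lead e hC Q k) : P ≤ Q := by
  have aux : ∀ B, ∀ w, w ∈ P → (∀ k, B ≤ k → e w k = 0) → w ∈ Q := by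
    intro B
    induction B with
    | zero =>
      intro w hw h0
      have he : e w = 0 := Finsupp.ext fun k => h0 k (Nat.zero_le k)
      have : w = 0 := by
        apply e.injective
        simpa using he
      rw [this]; exact Q.zero_mem
    | succ B ih =>
      intro w hw h0
      have hmem : e w B ∈ stmt13_lead e hC P B :=
        ⟨w, hw, fun k' h' => h0 k' h', rfl⟩
      obtain ⟨v, hv, hv0, hvB⟩ := h B hmem
      have hsub : w - v ∈ P := P.sub_mem hw (hQP hv)
      have hwv : ∀ k, B ≤ k → e (w - v) k = 0 := by
        intro k hk
        rcases eq_or_lt_of_le hk with rfl | hlt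
        · simp [map_sub, Finsupp.sub_apply, hvB]
        · simp [map_sub, Finsupp.sub_apply, h0 k (by omega), hv0 k hlt]
      have hmem' : w - v ∈ Q := ih (w - v) hsub hwv
      have : w = (w - v) + v := by abel
      rw [this]
      exact Q.add_mem hmem' hv
  intro w hw
  refine aux ((e w).support.sup id + 1) w hw ?_
  intro k hk
  by_contra hne
  have hks : k ∈ (e w).support := Finsupp.mem_support_iff.mpr hne
  have := Finset.le_sup (f := id) hks
  simp only [id] at this
  omega

end Aux

/-- Let `(R, m)` be a Noetherian local ring and `M` an Artinian `R`-module.  Let `N` be an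
`R[[x]]`-module which, as in the construction `M⟨x⁻¹⟩ = ⊕_{n ≥ 1} M x⁻ⁿ`, is additively
isomorphic to `ℕ →₀ M` (the index `n` recording the coefficient of `x^{-(n+1)}`), with `R`
acting coordinatewise and `x` acting as the shift.  Then `N` is an Artinian
`R[[x]]`-module. -/
theorem stmt13 (R : Type) [CommRing R] [IsNoetherianRing R] [IsLocalRing R]
    (M : Type) [AddCommGroup M] [Module R M] [IsArtinian R M]
    (N : Type) [AddCommGroup N] [Module (PowerSeries R) N]
    (e : N ≃+ (ℕ →₀ M))
    (hC : ∀ (r : R) (w : N), e ((PowerSeries.C (R := R) r) • w) = r • e w)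
    (hX : ∀ (w : N) (n : ℕ), e ((PowerSeries.X : PowerSeries R) • w) n = e w (n + 1)) :
    IsArtinian (PowerSeries R) N := by
  classical
  rw [← monotone_stabilizes_iff_artinian]
  intro P
  have hmono : ∀ i j, i ≤ j →
      OrderDual.ofDual (P j) ≤ OrderDual.ofDual (P i) := fun i j h => P.monotone h
  have hstabM : ∀ f : ℕ → Submodule R M, (∀ i, f (i + 1) ≤ f i) →
      ∃ n, ∀ m, n ≤ m → f m = f n := by
    intro f hf
    obtain ⟨n, hn⟩ := IsArtinian.monotone_stabilizes (R := R) (M := M)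
      ⟨fun i => OrderDual.toDual (f i), fun i j hij => antitone_nat_of_succ_le hf hij⟩
    exact ⟨n, fun m hm => ((hn m hm).symm : f m = f n)⟩
  obtain ⟨I, hI⟩ := stmt13_antitone_stab hstabM
    (fun i k => stmt13_lead e hC (OrderDual.ofDual (P i)) k)
    (fun i k => stmt13_lead_succ_le e hC hX _ k)
    (fun i k => stmt13_lead_mono e hC (hmono i (i + 1) (by omega)) k)
  refine ⟨I, fun m hm => ?_⟩
  have h1 : OrderDual.ofDual (P m) ≤ OrderDual.ofDual (P I) := hmono I m hm
  have h2 : OrderDual.ofDual (P I) ≤ OrderDual.ofDual (P m) :=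
    stmt13_le_of_lead_le e hC h1 (fun k => (hI m hm k).ge)
  exact (le_antisymm h2 h1 : OrderDual.ofDual (P I) = OrderDual.ofDual (P m))
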